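/- Let n ∈ ℕ, n ≥ 1, let h̄ ∈ ℕ, h̄ ≥ 1, and let y : {0,…,h̄−1} → ℝ^n. Then Σ_{s=0}^{h̄−1} ‖ Σ_{i=0}^{s−1} y(i) ‖² ≤ λmax(E_{h̄}) · Σ_{s=0}^{h̄−1} ‖y(s)‖², where ‖·‖ is the Euclidean norm (the inner sum being 0 for s = 0). -/

import Mathlib

open Matrix Finset

/-- The `h × h` matrix with entries `min i j` (zero-based indices). -/
noncomputable def Emat (h : ℕ) : Matrix (Fin h) (Fin h) ℝ :=
  fun i j => (min (i : ℕ) (j : ℕ) : ℝ)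

lemma Emat_isHermitian (h : ℕ) : (Emat h).IsHermitian := by
  ext i j
  simp [Emat, Matrix.conjTranspose_apply, min_comm]

/-- The largest eigenvalue of `Emat h`. -/
noncomputable def lamMax (h : ℕ) : ℝ := ⨆ i, (Emat_isHermitian h).eigenvalues i

/-- Rayleigh-type bound for a hermitian real matrix. -/
lemma rayleigh_aux {h : ℕ} (A : Matrix (Fin h) (Fin h) ℝ) (hA : A.IsHermitian)
    (x : EuclideanSpace ℝ (Fin h)) :
    inner ℝ (Matrix.toEuclideanLin A x) x ≤ (⨆ i, hA.eigenvalues i) * (inner ℝ x x : ℝ) := by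
  set b := hA.eigenvectorBasis
  set T := Matrix.toEuclideanLin A
  have hsym : T.IsSymmetric := (Matrix.isHermitian_iff_isSymmetric).1 hA
  have hTb : ∀ j, T (b j) = hA.eigenvalues j • b j := by
    intro j
    have := hA.mulVec_eigenvectorBasis j
    apply (EuclideanSpace.equiv (Fin h) ℝ).injective
    ext k
    have h1 : T (b j) = WithLp.toLp 2 (A *ᵥ (b j).ofLp) := by
      simp [T, Matrix.toEuclideanLin_apply]
    rw [h1, this]
    simp [b]
  have key : (inner ℝ (T x) x : ℝ) = ∑ i, hA.eigenvalues i * (b.repr x i)^2 := by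
    have := b.repr.inner_map_map (T x) x
    rw [← this]
    rw [PiLp.inner_apply]
    refine Finset.sum_congr rfl fun i _ => ?_
    have hrep : b.repr (T x) i = hA.eigenvalues i * b.repr x i := by
      rw [OrthonormalBasis.repr_apply_apply, OrthonormalBasis.repr_apply_apply,
        ← hsym (b i) x, hTb i]
      simp [real_inner_smul_left, Finset.mul_sum, mul_assoc]
    rw [hrep]
    simp [pow_two]
    ring
  have key2 : (inner ℝ x x : ℝ) = ∑ i, (b.repr x i)^2 := by
    have := b.repr.inner_map_map x x
    rw [← this, PiLp.inner_apply]
    refine Finset.sum_congr rfl fun i _ => by simp [pow_two]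
  rw [key, key2, Finset.mul_sum]
  refine Finset.sum_le_sum fun i _ => ?_
  have hle : hA.eigenvalues i ≤ ⨆ j, hA.eigenvalues j :=
    le_ciSup (Set.Finite.bddAbove (Set.finite_range _)) i
  exact mul_le_mul_of_nonneg_right hle (sq_nonneg _)

/-- Expansion of the energy of running partial sums as a quadratic form. -/
lemma expand_sq (h : ℕ) (u : Fin h → ℝ) :
    ∑ s : Fin h, (∑ i ∈ Finset.Iio s, u i)^2
      = ∑ i : Fin h, ∑ j : Fin h, ((h - 1 - max (i:ℕ) (j:ℕ) : ℕ) : ℝ) * (u i * u j) := by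
  have step1 : ∀ s : Fin h, (∑ i ∈ Finset.Iio s, u i)^2
      = ∑ i : Fin h, ∑ j : Fin h, if i < s ∧ j < s then u i * u j else 0 := by
    intro s
    have hIio : Finset.Iio s = Finset.univ.filter (· < s) := by ext; simp
    rw [hIio, Finset.sum_filter, pow_two, Finset.sum_mul_sum]
    refine Finset.sum_congr rfl fun i _ => Finset.sum_congr rfl fun j _ => ?_
    rw [ite_zero_mul_ite_zero]
  simp_rw [step1]
  rw [Finset.sum_comm]
  refine Finset.sum_congr rfl fun i _ => ?_
  rw [Finset.sum_comm]
  refine Finset.sum_congr rfl fun j _ => ?_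
  rw [← Finset.sum_filter]
  have hfil : Finset.filter (fun s : Fin h => i < s ∧ j < s) Finset.univ
      = Finset.Ioi (max i j) := by
    ext s; simp [Finset.mem_Ioi, max_lt_iff]
  rw [hfil, Finset.sum_const, Fin.card_Ioi]
  have hmax : ((max i j : Fin h) : ℕ) = max (i:ℕ) (j:ℕ) := Monotone.map_max (fun a b => id)
  rw [hmax, nsmul_eq_mul]

/-- Scalar form of the lifted ℓ₂ gain bound. -/
lemma scalar_bound (h : ℕ) (u : Fin h → ℝ) :
    ∑ s : Fin h, (∑ i ∈ Finset.Iio s, u i)^2 ≤ lamMax h * ∑ s : Fin h, (u s)^2 := by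
  set x : EuclideanSpace ℝ (Fin h) := WithLp.toLp 2 (fun i => u (Fin.rev i)) with hxdef
  have hx2 : (inner ℝ x x : ℝ) = ∑ s : Fin h, (u s)^2 := by
    rw [PiLp.inner_apply]
    rw [← Fintype.sum_bijective Fin.rev Fin.rev_bijective _ _ (fun i => rfl)]
    refine Finset.sum_congr rfl fun i _ => ?_
    simp [hxdef, pow_two]
  have hq : (inner ℝ (Matrix.toEuclideanLin (Emat h) x) x : ℝ)
      = ∑ i : Fin h, ∑ j : Fin h, ((h - 1 - max (i:ℕ) (j:ℕ) : ℕ) : ℝ) * (u i * u j) := by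
    rw [PiLp.inner_apply]
    have happ : ∀ i, (Matrix.toEuclideanLin (Emat h) x) i = ∑ j, Emat h i j * x j := by
      intro i
      simp [Matrix.toEuclideanLin_apply, Matrix.mulVec, dotProduct]
    calc ∑ i, inner ℝ ((Matrix.toEuclideanLin (Emat h) x) i) (x i)
        = ∑ i, ∑ j, Emat h i j * x j * x i := by
          refine Finset.sum_congr rfl fun i _ => ?_
          rw [RCLike.inner_apply, starRingEnd_apply, star_trivial, happ, mul_comm, Finset.sum_mul]
      _ = ∑ i, ∑ j, Emat h (Fin.rev i) (Fin.rev j) * u j * u i := by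
          rw [← Fintype.sum_bijective Fin.rev Fin.rev_bijective _ _ (fun i => rfl)]
          refine Finset.sum_congr rfl fun i _ => ?_
          rw [← Fintype.sum_bijective Fin.rev Fin.rev_bijective _ _ (fun j => rfl)]
          refine Finset.sum_congr rfl fun j _ => ?_
          simp [hxdef]
      _ = ∑ i : Fin h, ∑ j : Fin h, ((h - 1 - max (i:ℕ) (j:ℕ) : ℕ) : ℝ) * (u i * u j) := by
          refine Finset.sum_congr rfl fun i _ => Finset.sum_congr rfl fun j _ => ?_
          have hco : Emat h (Fin.rev i) (Fin.rev j)
              = ((h - 1 - max (i:ℕ) (j:ℕ) : ℕ) : ℝ) := by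
            have hi := i.isLt
            have hj := j.isLt
            have hval : min ((Fin.rev i : Fin h) : ℕ) ((Fin.rev j : Fin h) : ℕ)
                = h - 1 - max (i:ℕ) (j:ℕ) := by
              rw [Fin.val_rev, Fin.val_rev]
              rcases le_total (i:ℕ) (j:ℕ) with hle | hle
              · rw [max_eq_right hle,
                  min_eq_right (Nat.sub_le_sub_left (Nat.succ_le_succ hle) h)]
                omega
              · rw [max_eq_left hle,
                  min_eq_left (Nat.sub_le_sub_left (Nat.succ_le_succ hle) h)]
                omega
            unfold Emat
            exact_mod_cast congrArg (Nat.cast : ℕ → ℝ) hval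
          rw [hco]; ring
  rw [expand_sq, ← hq, ← hx2]
  exact rayleigh_aux (Emat h) (Emat_isHermitian h) x

/-- Single-sampling-interval (lifted) form of the ℓ₂ gain bound: for any
`y : {0,…,h̄−1} → ℝⁿ`, the energy of the running partial sums is bounded by
`λmax(E_h̄)` times the energy of `y`. -/
theorem lifted_l2_gain_bound
    (n : ℕ) (hn : 1 ≤ n) (hbar : ℕ) (hhbar : 1 ≤ hbar)
    (y : Fin hbar → EuclideanSpace ℝ (Fin n)) :
    ∑ s : Fin hbar, ‖∑ i ∈ Finset.Iio s, y i‖ ^ 2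
      ≤ lamMax hbar * ∑ s : Fin hbar, ‖y s‖ ^ 2 := by
  have hnorm : ∀ v : EuclideanSpace ℝ (Fin n), ‖v‖ ^ 2 = ∑ k, (v k)^2 := by
    intro v
    rw [EuclideanSpace.norm_eq, Real.sq_sqrt (by positivity)]
    simp [Real.norm_eq_abs, sq_abs]
  have hcoord : ∀ (s : Fin hbar) (k : Fin n),
      (∑ i ∈ Finset.Iio s, y i) k = ∑ i ∈ Finset.Iio s, y i k := by
    intro s k
    rw [WithLp.ofLp_sum, Finset.sum_apply]
  calc ∑ s : Fin hbar, ‖∑ i ∈ Finset.Iio s, y i‖ ^ 2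
      = ∑ k : Fin n, ∑ s : Fin hbar, (∑ i ∈ Finset.Iio s, y i k)^2 := by
        rw [Finset.sum_comm]
        refine Finset.sum_congr rfl fun s _ => ?_
        rw [hnorm]
        exact Finset.sum_congr rfl fun k _ => by rw [hcoord]
    _ ≤ ∑ k : Fin n, lamMax hbar * ∑ s : Fin hbar, (y s k)^2 :=
        Finset.sum_le_sum fun k _ => scalar_bound hbar (fun s => y s k)
    _ = lamMax hbar * ∑ s : Fin hbar, ‖y s‖ ^ 2 := by
        rw [← Finset.mul_sum, Finset.sum_comm]
        simp_rw [hnorm]
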